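/- Let h : ℤ → ℤ be a function vanishing outside a finite set, let m ≥ 1 be an integer, and let ℓ be an integer. Suppose h(i) = h(2−i) for every integer i with i ≠ 0 and i ≠ 2, and h(0) = h(2) + ℓ (the Sabloff duality relations). Then Σ_{k∈ℤ} (2k+1) Σ_{i=0}^{2m-1} (−1)^i h(2mk+i) = Σ_{k∈ℤ} (2 h(2mk) − h(2mk+1)) − ℓ. (This is the arithmetic identity, deduced from Sabloff duality, that completes the proof of Proposition 4.5 of the paper.) -/

import Mathlib

private lemma aux_ediv_of {M k i : ℤ} (hM : 0 < M) (h0 : 0 ≤ i) (h1 : i < M) :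
    (M * k + i) / M = k := by
  rw [add_comm, Int.add_mul_ediv_left _ _ hM.ne', Int.ediv_eq_zero_of_lt h0 h1, zero_add]

private lemma aux_emod_of {M k i : ℤ} (hM : 0 < M) (h0 : 0 ≤ i) (h1 : i < M) :
    (M * k + i) % M = i := by
  rw [add_comm, Int.add_mul_emod_self_left, Int.emod_eq_of_lt h0 h1]

private lemma quot_bounds {M q r lo hi : ℤ} (hM : 0 < M) (hr0 : 0 ≤ r) (hr1 : r < M)
    (h1 : M * lo ≤ M * q + r) (h2 : M * q + r ≤ M * hi + (M - 1)) : lo ≤ q ∧ q ≤ hi := by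
  constructor
  · by_contra hc
    push_neg at hc
    have h3 : q + 1 ≤ lo := hc
    nlinarith [mul_le_mul_of_nonneg_left h3 hM.le]
  · by_contra hc
    push_neg at hc
    have h3 : hi + 1 ≤ q := hc
    nlinarith [mul_le_mul_of_nonneg_left h3 hM.le]

private def cf (m : ℕ) (n : ℤ) : ℤ :=
  (2 * (n / (2 * (m : ℤ))) + 1) * (-1) ^ (n % (2 * (m : ℤ))).toNat

private def df (m : ℕ) (n : ℤ) : ℤ :=
  if n % (2 * (m : ℤ)) = 0 then 2 else if n % (2 * (m : ℤ)) = 1 then -1 else 0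

private lemma cf_eval (m : ℕ) {k i : ℤ} (h0 : 0 ≤ i) (h1 : i < 2 * (m : ℤ)) :
    cf m (2 * (m : ℤ) * k + i) = (2 * k + 1) * (-1) ^ i.toNat := by
  have hM : 0 < 2 * (m : ℤ) := lt_of_le_of_lt h0 h1
  unfold cf
  rw [aux_ediv_of hM h0 h1, aux_emod_of hM h0 h1]

private lemma df_eval (m : ℕ) {k i : ℤ} (h0 : 0 ≤ i) (h1 : i < 2 * (m : ℤ)) :
    df m (2 * (m : ℤ) * k + i) = if i = 0 then 2 else if i = 1 then -1 else 0 := by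
  have hM : 0 < 2 * (m : ℤ) := lt_of_le_of_lt h0 h1
  unfold df
  rw [aux_emod_of hM h0 h1]

private lemma key_lemma (m : ℕ) (hm : 1 ≤ m) (n : ℤ) :
    cf m n + cf m (2 - n) = df m n + df m (2 - n) := by
  have hm' : (1 : ℤ) ≤ (m : ℤ) := by exact_mod_cast hm
  have hM : 0 < 2 * (m : ℤ) := by linarith
  have hM2 : 2 ≤ 2 * (m : ℤ) := by linarith
  have hr0 : 0 ≤ n % (2 * (m : ℤ)) := Int.emod_nonneg n hM.ne'
  have hr1 : n % (2 * (m : ℤ)) < 2 * (m : ℤ) := Int.emod_lt_of_pos n hM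
  set q := n / (2 * (m : ℤ)) with hq
  set r := n % (2 * (m : ℤ)) with hr
  have hn : n = 2 * (m : ℤ) * q + r := by
    rw [hq, hr]; exact (Int.mul_ediv_add_emod n (2 * (m : ℤ))).symm
  rcases eq_or_ne r 0 with h0 | h0
  · rw [h0] at hn
    rcases eq_or_lt_of_le hM2 with hMeq | hMgt
    · -- m = 1
      have hn2 : (2 : ℤ) - n = 2 * (m : ℤ) * (1 - q) + 0 := by
        linear_combination -hn + hMeq
      rw [hn2, hn, cf_eval m le_rfl hM, cf_eval m le_rfl hM,
        df_eval m le_rfl hM, df_eval m le_rfl hM]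
      norm_num [show ((2:ℤ)).toNat = 2 from rfl]
      ring
    · -- m ≥ 2
      have hn2 : (2 : ℤ) - n = 2 * (m : ℤ) * (-q) + 2 := by linear_combination -hn
      rw [hn2, hn, cf_eval m le_rfl hM, cf_eval m (by norm_num) hMgt,
        df_eval m le_rfl hM, df_eval m (by norm_num) hMgt]
      norm_num [show ((2:ℤ)).toNat = 2 from rfl]
      ring
  · rcases eq_or_ne r 1 with h1 | h1
    · rw [h1] at hn
      have hn2 : (2 : ℤ) - n = 2 * (m : ℤ) * (-q) + 1 := by linear_combination -hn
      rw [hn2, hn, cf_eval m (by norm_num) (by linarith), cf_eval m (by norm_num) (by linarith),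
        df_eval m (by norm_num) (by linarith), df_eval m (by norm_num) (by linarith)]
      norm_num [show ((2:ℤ)).toNat = 2 from rfl]
      ring
    · rcases eq_or_ne r 2 with h2 | h2
      · rw [h2] at hn
        have h2M : (2 : ℤ) < 2 * (m : ℤ) := by rw [h2] at hr1; exact hr1
        have hn2 : (2 : ℤ) - n = 2 * (m : ℤ) * (-q) + 0 := by linear_combination -hn
        rw [hn2, hn, cf_eval m (by norm_num) h2M, cf_eval m le_rfl hM,
          df_eval m (by norm_num) h2M, df_eval m le_rfl hM]
        norm_num [show ((2:ℤ)).toNat = 2 from rfl]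
        ring
      · -- 3 ≤ r
        have h3 : 3 ≤ r := by omega
        have hn2 : (2 : ℤ) - n = 2 * (m : ℤ) * (-q - 1) + (2 * (m : ℤ) + 2 - r) := by
          linear_combination -hn
        have hb0 : 0 ≤ 2 * (m : ℤ) + 2 - r := by linarith
        have hb1 : 2 * (m : ℤ) + 2 - r < 2 * (m : ℤ) := by linarith
        rw [hn2, hn, cf_eval m hr0 hr1, cf_eval m hb0 hb1,
          df_eval m hr0 hr1, df_eval m hb0 hb1]
        have hpow : ((-1 : ℤ)) ^ ((2 * (m : ℤ) + 2 - r).toNat) = (-1) ^ r.toNat := by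
          rw [neg_one_pow_eq_pow_mod_two, neg_one_pow_eq_pow_mod_two (n := r.toNat)]
          congr 1
          omega
        rw [hpow, if_neg h0, if_neg h1, if_neg (by linarith), if_neg (by linarith)]
        ring

/-- Let `h : ℤ → ℤ` vanish outside a finite set, `m ≥ 1`, `ℓ ∈ ℤ`.
If `h i = h (2 - i)` for all `i ∉ {0, 2}` and `h 0 = h 2 + ℓ` (Sabloff duality), then
`Σ_k (2k+1) Σ_{i=0}^{2m-1} (-1)^i h (2mk+i) = Σ_k (2 h (2mk) - h (2mk+1)) - ℓ`. -/
theorem sabloff_duality_identity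
    (h : ℤ → ℤ) (hfin : (Function.support h).Finite)
    (m : ℕ) (hm : 1 ≤ m) (ℓ : ℤ)
    (hdual : ∀ i : ℤ, i ≠ 0 → i ≠ 2 → h i = h (2 - i))
    (h02 : h 0 = h 2 + ℓ) :
    ∑ᶠ k : ℤ, (2 * k + 1) *
        ∑ i ∈ Finset.range (2 * m), (-1 : ℤ) ^ i * h (2 * (m : ℤ) * k + (i : ℤ))
      = (∑ᶠ k : ℤ, (2 * h (2 * (m : ℤ) * k) - h (2 * (m : ℤ) * k + 1))) - ℓ := by
  classical
  have hm' : (1 : ℤ) ≤ (m : ℤ) := by exact_mod_cast hm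
  have hM : (0 : ℤ) < 2 * (m : ℤ) := by linarith
  have hM2 : (2 : ℤ) ≤ 2 * (m : ℤ) := by linarith
  obtain ⟨N, hN0, hN⟩ : ∃ N : ℤ, 0 ≤ N ∧ ∀ n : ℤ, h n ≠ 0 → -N ≤ n ∧ n ≤ N := by
    refine ⟨(hfin.toFinset.sup Int.natAbs : ℕ), Int.natCast_nonneg _, fun n hn => ?_⟩
    have := Finset.le_sup (f := Int.natAbs) (hfin.mem_toFinset.2 hn)
    omega
  set K0 : ℤ := N + 2 * (m : ℤ) with hK0def
  have hK00 : 0 ≤ K0 := by linarith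
  have hK0N : N ≤ 2 * (m : ℤ) * K0 := by nlinarith
  set K : Finset ℤ := Finset.Icc (-K0) K0 with hKdef
  set S : Finset ℤ := Finset.Icc (-(2 * (m : ℤ) * K0)) (2 * (m : ℤ) * K0 + (2 * (m : ℤ) - 1))
    with hSdef
  have hsupS : ∀ n : ℤ, h n ≠ 0 → n ∈ S := by
    intro n hn
    obtain ⟨hl, hr⟩ := hN n hn
    rw [hSdef, Finset.mem_Icc]
    constructor <;> linarith
  have hFzero : ∀ k : ℤ, k ∉ K → ∀ i : ℤ, 0 ≤ i → i < 2 * (m : ℤ) → h (2 * (m : ℤ) * k + i) = 0 := by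
    intro k hk i h0 h1
    by_contra hne
    obtain ⟨hl, hr⟩ := hN _ hne
    have hb := quot_bounds (lo := -K0) (hi := K0) hM h0 h1 (by linarith) (by linarith)
    rw [hKdef, Finset.mem_Icc] at hk
    exact hk ⟨hb.1, hb.2⟩
  have hA : (∑ᶠ k : ℤ, (2 * k + 1) *
        ∑ i ∈ Finset.range (2 * m), (-1 : ℤ) ^ i * h (2 * (m : ℤ) * k + (i : ℤ)))
      = ∑ k ∈ K, (2 * k + 1) *
        ∑ i ∈ Finset.range (2 * m), (-1 : ℤ) ^ i * h (2 * (m : ℤ) * k + (i : ℤ)) := by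
    apply finsum_eq_sum_of_support_subset
    intro k hk
    simp only [Function.mem_support] at hk
    by_contra hkK
    apply hk
    rw [Finset.sum_eq_zero, mul_zero]
    intro i hi
    rw [Finset.mem_range] at hi
    rw [hFzero k hkK i (Int.natCast_nonneg i) (by exact_mod_cast hi), mul_zero]
  have hB : (∑ᶠ k : ℤ, (2 * h (2 * (m : ℤ) * k) - h (2 * (m : ℤ) * k + 1)))
      = ∑ k ∈ K, (2 * h (2 * (m : ℤ) * k) - h (2 * (m : ℤ) * k + 1)) := by
    apply finsum_eq_sum_of_support_subset
    intro k hk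
    simp only [Function.mem_support] at hk
    by_contra hkK
    apply hk
    have e0 : h (2 * (m : ℤ) * k) = 0 := by
      have := hFzero k hkK 0 le_rfl hM
      rwa [add_zero] at this
    have e1 : h (2 * (m : ℤ) * k + 1) = 0 := hFzero k hkK 1 zero_le_one (by linarith)
    rw [e0, e1]; ring
  have hC : (∑ k ∈ K, (2 * k + 1) *
        ∑ i ∈ Finset.range (2 * m), (-1 : ℤ) ^ i * h (2 * (m : ℤ) * k + (i : ℤ)))
      = ∑ n ∈ S, cf m n * h n := by
    simp_rw [Finset.mul_sum]
    rw [← Finset.sum_product']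
    refine Finset.sum_nbij' (fun p : ℤ × ℕ => 2 * (m : ℤ) * p.1 + (p.2 : ℤ))
      (fun n => (n / (2 * (m : ℤ)), (n % (2 * (m : ℤ))).toNat)) ?_ ?_ ?_ ?_ ?_
    · rintro ⟨k, i⟩ hp
      dsimp only
      rw [Finset.mem_product, hKdef, Finset.mem_Icc, Finset.mem_range] at hp
      obtain ⟨⟨hk1, hk2⟩, hi⟩ := hp
      have hi' : (i : ℤ) < 2 * (m : ℤ) := by exact_mod_cast hi
      have hi0 : (0 : ℤ) ≤ (i : ℤ) := Int.natCast_nonneg i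
      rw [hSdef, Finset.mem_Icc]
      have b1 := mul_le_mul_of_nonneg_left hk1 hM.le
      have b2 := mul_le_mul_of_nonneg_left hk2 hM.le
      dsimp only at b1 b2
      constructor <;> linarith
    · intro n hn
      rw [hSdef, Finset.mem_Icc] at hn
      have hr0 : 0 ≤ n % (2 * (m : ℤ)) := Int.emod_nonneg n hM.ne'
      have hr1 : n % (2 * (m : ℤ)) < 2 * (m : ℤ) := Int.emod_lt_of_pos n hM
      have hdm : n = 2 * (m : ℤ) * (n / (2 * (m : ℤ))) + n % (2 * (m : ℤ)) :=
        (Int.mul_ediv_add_emod n (2 * (m : ℤ))).symm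
      have hb := quot_bounds (lo := -K0) (hi := K0) hM hr0 hr1 (by linarith) (by linarith)
      rw [Finset.mem_product, hKdef, Finset.mem_Icc, Finset.mem_range]
      refine ⟨⟨hb.1, hb.2⟩, ?_⟩
      omega
    · rintro ⟨k, i⟩ hp
      rw [Finset.mem_product, Finset.mem_range] at hp
      have hi' : (i : ℤ) < 2 * (m : ℤ) := by exact_mod_cast hp.2
      simp [aux_ediv_of hM (Int.natCast_nonneg i) hi', aux_emod_of hM (Int.natCast_nonneg i) hi']
    · intro n hn
      have hr0 : 0 ≤ n % (2 * (m : ℤ)) := Int.emod_nonneg n hM.ne'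
      dsimp only
      rw [Int.toNat_of_nonneg hr0]
      exact Int.mul_ediv_add_emod n (2 * (m : ℤ))
    · rintro ⟨k, i⟩ hp
      dsimp only
      rw [Finset.mem_product, Finset.mem_range] at hp
      have hi' : (i : ℤ) < 2 * (m : ℤ) := by exact_mod_cast hp.2
      rw [cf_eval m (Int.natCast_nonneg i) hi']
      simp only [Int.toNat_natCast]
      ring
  have hD : (∑ k ∈ K, (2 * h (2 * (m : ℤ) * k) - h (2 * (m : ℤ) * k + 1)))
      = ∑ n ∈ S, df m n * h n := by
    have hstep : ∑ n ∈ S, df m n * h n = ∑ p ∈ K ×ˢ Finset.range (2 * m),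
        (if p.2 = 0 then 2 else if p.2 = 1 then (-1 : ℤ) else 0) *
          h (2 * (m : ℤ) * p.1 + (p.2 : ℤ)) := by
      refine Finset.sum_nbij' (fun n => (n / (2 * (m : ℤ)), (n % (2 * (m : ℤ))).toNat))
        (fun p : ℤ × ℕ => 2 * (m : ℤ) * p.1 + (p.2 : ℤ)) ?_ ?_ ?_ ?_ ?_
      · intro n hn
        rw [hSdef, Finset.mem_Icc] at hn
        have hr0 : 0 ≤ n % (2 * (m : ℤ)) := Int.emod_nonneg n hM.ne'
        have hr1 : n % (2 * (m : ℤ)) < 2 * (m : ℤ) := Int.emod_lt_of_pos n hM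
        have hdm : n = 2 * (m : ℤ) * (n / (2 * (m : ℤ))) + n % (2 * (m : ℤ)) :=
          (Int.mul_ediv_add_emod n (2 * (m : ℤ))).symm
        have hb := quot_bounds (lo := -K0) (hi := K0) hM hr0 hr1 (by linarith) (by linarith)
        rw [Finset.mem_product, hKdef, Finset.mem_Icc, Finset.mem_range]
        refine ⟨⟨hb.1, hb.2⟩, ?_⟩
        omega
      · rintro ⟨k, i⟩ hp
        dsimp only
        rw [Finset.mem_product, hKdef, Finset.mem_Icc, Finset.mem_range] at hp
        obtain ⟨⟨hk1, hk2⟩, hi⟩ := hp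
        have hi' : (i : ℤ) < 2 * (m : ℤ) := by exact_mod_cast hi
        have hi0 : (0 : ℤ) ≤ (i : ℤ) := Int.natCast_nonneg i
        rw [hSdef, Finset.mem_Icc]
        have b1 := mul_le_mul_of_nonneg_left hk1 hM.le
        have b2 := mul_le_mul_of_nonneg_left hk2 hM.le
        dsimp only at b1 b2
        constructor <;> linarith
      · intro n hn
        have hr0 : 0 ≤ n % (2 * (m : ℤ)) := Int.emod_nonneg n hM.ne'
        dsimp only
        rw [Int.toNat_of_nonneg hr0]
        exact Int.mul_ediv_add_emod n (2 * (m : ℤ))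
      · rintro ⟨k, i⟩ hp
        rw [Finset.mem_product, Finset.mem_range] at hp
        have hi' : (i : ℤ) < 2 * (m : ℤ) := by exact_mod_cast hp.2
        simp [aux_ediv_of hM (Int.natCast_nonneg i) hi', aux_emod_of hM (Int.natCast_nonneg i) hi']
      · intro n hn
        dsimp only
        have hr0 : 0 ≤ n % (2 * (m : ℤ)) := Int.emod_nonneg n hM.ne'
        have hdm : n = 2 * (m : ℤ) * (n / (2 * (m : ℤ))) + n % (2 * (m : ℤ)) :=
          (Int.mul_ediv_add_emod n (2 * (m : ℤ))).symm
        rw [Int.toNat_of_nonneg hr0, ← hdm]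
        by_cases hc0 : n % (2 * (m : ℤ)) = 0
        · simp [df, hc0]
        · by_cases hc1 : n % (2 * (m : ℤ)) = 1
          · simp [df, hc0, hc1]
          · have t0 : (n % (2 * (m : ℤ))).toNat ≠ 0 := by omega
            have t1 : (n % (2 * (m : ℤ))).toNat ≠ 1 := by omega
            simp [df, hc0, hc1, t0, t1]
    rw [hstep, Finset.sum_product]
    refine Finset.sum_congr rfl fun k _ => ?_
    dsimp only
    have hsub : ({0, 1} : Finset ℕ) ⊆ Finset.range (2 * m) := by
      intro x hx
      simp only [Finset.mem_insert, Finset.mem_singleton] at hx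
      rw [Finset.mem_range]
      omega
    rw [← Finset.sum_subset hsub (by
      intro x _ hxn
      simp only [Finset.mem_insert, Finset.mem_singleton, not_or] at hxn
      simp [hxn.1, hxn.2])]
    rw [Finset.sum_pair (by norm_num : (0 : ℕ) ≠ 1)]
    norm_num
    ring
  -- extension to symmetric interval
  set B : ℤ := 2 * (m : ℤ) * K0 + 2 * (m : ℤ) with hBdef
  have hMK0 : 0 ≤ 2 * (m : ℤ) * K0 := mul_nonneg hM.le hK00
  set S' : Finset ℤ := Finset.Icc (1 - B) (1 + B) with hS'def
  have hSS' : S ⊆ S' := by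
    rw [hSdef, hS'def]
    apply Finset.Icc_subset_Icc <;> [linarith; linarith]
  have hext : ∀ c' : ℤ → ℤ, ∑ n ∈ S, c' n * h n = ∑ n ∈ S', c' n * h n := by
    intro c'
    apply Finset.sum_subset hSS'
    intro n _ hnS
    have hzero : h n = 0 := by
      by_contra hh; exact hnS (hsupS n hh)
    rw [hzero, mul_zero]
  have hpairsub : ({0, 2} : Finset ℤ) ⊆ S' := by
    intro x hx
    simp only [Finset.mem_insert, Finset.mem_singleton] at hx
    rw [hS'def, Finset.mem_Icc]
    rcases hx with rfl | rfl <;> constructor <;> linarith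
  have hfinal : ∑ n ∈ S', (cf m n - df m n) * h n = -ℓ := by
    rw [← Finset.sum_sdiff hpairsub]
    have hz : ∑ n ∈ S' \ {0, 2}, (cf m n - df m n) * h n = 0 := by
      refine Finset.sum_involution (fun n _ => 2 - n) ?_ ?_ ?_ ?_
      · intro n hn
        rw [Finset.mem_sdiff] at hn
        have hne := hn.2
        simp only [Finset.mem_insert, Finset.mem_singleton, not_or] at hne
        have hd := hdual n hne.1 hne.2
        rw [← hd]
        linear_combination h n * key_lemma m hm n
      · intro n hn hfne
        intro heq
        have hn1 : n = 1 := by omega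
        have e1 : cf m 1 - df m 1 = 0 := by
          have h1eq : (1 : ℤ) = 2 * (m : ℤ) * 0 + 1 := by ring
          rw [h1eq, cf_eval m zero_le_one (by linarith), df_eval m zero_le_one (by linarith)]
          norm_num
        rw [hn1] at hfne
        exact hfne (by rw [e1, zero_mul])
      · intro n hn
        simp only [Finset.mem_sdiff, Finset.mem_insert, Finset.mem_singleton, not_or,
          hS'def, Finset.mem_Icc] at hn ⊢
        omega
      · intro n hn
        ring
    rw [hz, zero_add, Finset.sum_pair (by norm_num : (0 : ℤ) ≠ 2)]
    have e0 : cf m 0 - df m 0 = -1 := by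
      have h0eq : (0 : ℤ) = 2 * (m : ℤ) * 0 + 0 := by ring
      rw [h0eq, cf_eval m le_rfl hM, df_eval m le_rfl hM]
      norm_num
    have e2 : cf m 2 - df m 2 = 1 := by
      rcases eq_or_lt_of_le hM2 with hMeq | hMgt
      · have h2eq : (2 : ℤ) = 2 * (m : ℤ) * 1 + 0 := by rw [← hMeq]; ring
        rw [h2eq, cf_eval m le_rfl hM, df_eval m le_rfl hM]
        norm_num
      · have h2eq : (2 : ℤ) = 2 * (m : ℤ) * 0 + 2 := by ring
        rw [h2eq, cf_eval m (by norm_num) hMgt, df_eval m (by norm_num) hMgt]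
        norm_num [show ((2 : ℤ)).toNat = 2 from rfl]
    rw [e0, e2, h02]
    ring
  rw [hA, hC, hext (cf m), hB, hD, hext (df m)]
  simp_rw [sub_mul] at hfinal
  rw [Finset.sum_sub_distrib] at hfinal
  linarith
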